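/- Let T ∈ 𝕋 with non-pendant vertices v_1, ..., v_k, where v_i is adjacent to t_i pendant vertices. Then in the group inverse graph T#, the degree of v_i equals t_i. -/
import Mathlib


open SimpleGraph

/-- `X` is the group inverse of `A`. -/
def IsGroupInverse {n : Type*} [Fintype n] (A X : Matrix n n ℝ) : Prop :=
  A * X * A = A ∧ X * A * X = X ∧ A * X = X * A

/-- A matching of a graph: a set of pairwise non-incident edges. -/
def IsMatching {V : Type*} (G : SimpleGraph V) (M : Finset (Sym2 V)) : Prop :=
  (↑M : Set (Sym2 V)) ⊆ G.edgeSet ∧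
    ∀ e ∈ M, ∀ f ∈ M, e ≠ f → ∀ v : V, ¬(v ∈ e ∧ v ∈ f)

/-- A maximum matching: a matching of maximum cardinality. -/
def IsMaxMatching {V : Type*} (G : SimpleGraph V) (M : Finset (Sym2 V)) : Prop :=
  IsMatching G M ∧ ∀ N : Finset (Sym2 V), IsMatching G N → N.card ≤ M.card

/-- A nonempty list of edges alternately in and out of `M`,
beginning and ending with edges of `M`. -/
def IsAltEdgeList {V : Type*} (M : Set (Sym2 V)) : List (Sym2 V) → Prop
  | [] => False
  | [e] => e ∈ M
  | e :: f :: rest => e ∈ M ∧ f ∉ M ∧ IsAltEdgeList M rest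

/-- A pair of vertices is maximally matchable if they are joined by a path that is
alternating with respect to some maximum matching. -/
def MaxMatchable {V : Type*} (G : SimpleGraph V) (u v : V) : Prop :=
  ∃ (p : G.Walk u v) (M : Finset (Sym2 V)),
    p.IsPath ∧ IsMaxMatching G M ∧ IsAltEdgeList (↑M) p.edges

/-- `G` is a star: some center `c` is adjacent to exactly the other vertices,
and there are no other edges. -/
def IsStar {V : Type*} (G : SimpleGraph V) : Prop :=
  ∃ c : V, ∀ u v : V, G.Adj u v ↔ ((u = c ∧ v ≠ c) ∨ (v = c ∧ u ≠ c))

/-- The class 𝕋: trees with at least one non-pendant vertex in which every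
non-pendant vertex is adjacent to a pendant vertex. -/
def InClassT {V : Type*} [Fintype V] (T : SimpleGraph V) [DecidableRel T.Adj] : Prop :=
  T.IsTree ∧ (∃ v, T.degree v ≠ 1) ∧
    ∀ v, T.degree v ≠ 1 → ∃ u, T.Adj v u ∧ T.degree u = 1

/-- The number of pendant neighbours of `v`. -/
def pendantNbrs {V : Type*} [Fintype V] [DecidableEq V] (T : SimpleGraph V)
    [DecidableRel T.Adj] (v : V) : ℕ :=
  ((T.neighborFinset v).filter fun u => T.degree u = 1).card

set_option linter.unusedSectionVars false

namespace AuxClassT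

variable {V : Type*} [Fintype V] [DecidableEq V] (T : SimpleGraph V) [DecidableRel T.Adj]

lemma alt_head {M : Set (Sym2 V)} {e : Sym2 V} {l : List (Sym2 V)}
    (h : IsAltEdgeList M (e :: l)) : e ∈ M := by
  cases l with
  | nil => exact h
  | cons f r => exact h.1

lemma alt_append {M : Set (Sym2 V)} :
    ∀ l, IsAltEdgeList M l → ∀ f e, f ∉ M → e ∈ M → IsAltEdgeList M (l ++ [f, e])
  | [], h => absurd h (by simp [IsAltEdgeList])
  | [a], h => fun f e hf he => ⟨h, hf, he⟩
  | a :: b :: rest, h => fun f e hf he =>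
      ⟨h.1, h.2.1, alt_append rest h.2.2 f e hf he⟩

lemma alt_reverse {M : Set (Sym2 V)} :
    ∀ l, IsAltEdgeList M l → IsAltEdgeList M l.reverse
  | [], h => absurd h (by simp [IsAltEdgeList])
  | [a], h => h
  | a :: b :: rest, h => by
      have : (a :: b :: rest).reverse = rest.reverse ++ [b, a] := by simp
      rw [this]
      exact alt_append _ (alt_reverse rest h.2.2) _ _ h.2.1 h.1

variable {T}

lemma pendant_unique {u a b : V} (hu : T.degree u = 1) (ha : T.Adj u a) (hb : T.Adj u b) :
    a = b := by
  have h1 : a ∈ T.neighborFinset u := by rwa [mem_neighborFinset]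
  have h2 : b ∈ T.neighborFinset u := by rwa [mem_neighborFinset]
  exact Finset.card_le_one.mp (le_of_eq hu) _ h1 _ h2

lemma edge_endpoint {e : Sym2 V} (he : e ∈ T.edgeSet) {a : V} (ha : a ∈ e) :
    ∃ b, T.Adj a b ∧ e = s(a, b) := by
  induction e with
  | _ x y =>
    rw [Sym2.mem_iff] at ha
    rcases ha with rfl | rfl
    · exact ⟨y, he, rfl⟩
    · exact ⟨x, (T.mem_edgeSet.mp he).symm, Sym2.eq_swap.symm⟩

lemma pendant_edge {M : Finset (Sym2 V)} (hM : IsMatching T M) {p x : V}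
    (hp : T.degree p = 1) (hpx : T.Adj p x) {f : Sym2 V} (hf : f ∈ M) (hpf : p ∈ f) :
    f = s(p, x) := by
  obtain ⟨y, hy, rfl⟩ := edge_endpoint (hM.1 hf) hpf
  rw [pendant_unique hp hy hpx]

/-- two edges of a matching sharing a vertex are equal -/
lemma matching_eq {M : Finset (Sym2 V)} (hM : IsMatching T M) {e f : Sym2 V}
    (he : e ∈ M) (hf : f ∈ M) {x : V} (hxe : x ∈ e) (hxf : x ∈ f) : e = f := by
  by_contra hne
  exact hM.2 e he f hf hne x ⟨hxe, hxf⟩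

lemma exists_max_matching : ∃ M, IsMaxMatching T M := by
  classical
  obtain ⟨M, hM, hmax⟩ := Finset.exists_max_image
    ((Finset.univ : Finset (Finset (Sym2 V))).filter fun M => IsMatching T M)
    Finset.card
    ⟨∅, by simp [IsMatching]⟩
  refine ⟨M, (Finset.mem_filter.mp hM).2, fun N hN => hmax N ?_⟩
  exact Finset.mem_filter.mpr ⟨Finset.mem_univ _, hN⟩

/-- in a max matching of a tree in 𝕋, the partner of a non-pendant vertex is pendant -/
lemma edge_pendant (hT : InClassT T) {M : Finset (Sym2 V)} (hM : IsMaxMatching T M)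
    {x b : V} (he : s(x, b) ∈ M) (hx : T.degree x ≠ 1) :
    T.Adj x b ∧ T.degree b = 1 := by
  have hadj : T.Adj x b := T.mem_edgeSet.mp (hM.1.1 he)
  refine ⟨hadj, ?_⟩
  by_contra hb
  obtain ⟨px, hpx, hpx1⟩ := hT.2.2 x hx
  obtain ⟨pb, hpb, hpb1⟩ := hT.2.2 b hb
  have hxb : x ≠ b := hadj.ne
  have hpxx : px ≠ x := fun h => hx (h ▸ hpx1)
  have hpxb : px ≠ b := fun h => hb (h ▸ hpx1)
  have hpbb : pb ≠ b := fun h => hb (h ▸ hpb1)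
  have hpbx : pb ≠ x := fun h => hx (h ▸ hpb1)
  have hpxpb : px ≠ pb := by
    rintro rfl
    exact hxb (pendant_unique hpx1 hpx.symm hpb.symm)
  -- px unmatched
  have hpxu : ∀ f ∈ M, px ∉ f := by
    intro f hf hpf
    have := pendant_edge hM.1 hpx1 hpx.symm hf hpf
    subst this
    have : s(px, x) = s(x, b) :=
      matching_eq hM.1 hf he (Sym2.mem_iff.mpr (Or.inr rfl))
        (Sym2.mem_iff.mpr (Or.inl rfl))
    rw [Sym2.eq_iff] at this
    rcases this with ⟨h1, _⟩ | ⟨h1, _⟩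
    · exact hpxx h1
    · exact hpxb h1
  have hpbu : ∀ f ∈ M, pb ∉ f := by
    intro f hf hpf
    have := pendant_edge hM.1 hpb1 hpb.symm hf hpf
    subst this
    have : s(pb, b) = s(x, b) :=
      matching_eq hM.1 hf he (Sym2.mem_iff.mpr (Or.inr rfl))
        (Sym2.mem_iff.mpr (Or.inr rfl))
    rw [Sym2.eq_iff] at this
    rcases this with ⟨h1, _⟩ | ⟨h1, _⟩
    · exact hpbx h1
    · exact hpbb h1
  set M0 := M.erase s(x, b) with hM0
  have hb1 : s(b, pb) ∉ M0 := fun h =>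
    hpbu _ (Finset.mem_of_mem_erase h) (by simp)
  have hx1 : s(x, px) ∉ insert s(b, pb) M0 := by
    intro h
    rcases Finset.mem_insert.mp h with h | h
    · rw [Sym2.eq_iff] at h
      rcases h with ⟨h1, _⟩ | ⟨_, h2⟩
      · exact hxb h1
      · exact hpxb h2
    · exact hpxu _ (Finset.mem_of_mem_erase h) (by simp)
  set M2 := insert s(x, px) (insert s(b, pb) M0) with hM2
  -- it is a matching
  have hmem : ∀ f ∈ M2, f = s(x, px) ∨ f = s(b, pb) ∨ (f ∈ M ∧ f ≠ s(x, b)) := by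
    intro f hf
    rcases Finset.mem_insert.mp hf with h | h
    · exact Or.inl h
    rcases Finset.mem_insert.mp h with h | h
    · exact Or.inr (Or.inl h)
    · exact Or.inr (Or.inr ⟨Finset.mem_of_mem_erase h, Finset.ne_of_mem_erase h⟩)
  have hshare : ∀ f1 ∈ M2, ∀ f2 ∈ M2, f1 ≠ f2 → ∀ w : V, ¬(w ∈ f1 ∧ w ∈ f2) := by
    have key : ∀ f1 ∈ M2, ∀ f2 ∈ M2, f1 ≠ f2 → ∀ w : V, w ∈ f1 → w ∈ f2 → False := by
      -- handle by cases; by symmetry do a helper on ordered pairs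
      intro f1 h1 f2 h2 hne w hw1 hw2
      rcases hmem f1 h1 with rfl | rfl | ⟨hm1, hne1⟩ <;>
        rcases hmem f2 h2 with rfl | rfl | ⟨hm2, hne2⟩
      · exact hne rfl
      · -- s(x,px) vs s(b,pb)
        rcases Sym2.mem_iff.mp hw1 with rfl | rfl <;>
          rcases Sym2.mem_iff.mp hw2 with h | h
        · exact hxb h
        · exact hpbx h.symm
        · exact hpxb h
        · exact hpxpb h
      · rcases Sym2.mem_iff.mp hw1 with rfl | rfl
        · exact hne2 (matching_eq hM.1 hm2 he hw2 (Sym2.mem_iff.mpr (Or.inl rfl)))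
        · exact hpxu _ hm2 hw2
      · -- s(b,pb) vs s(x,px)
        rcases Sym2.mem_iff.mp hw1 with rfl | rfl <;>
          rcases Sym2.mem_iff.mp hw2 with h | h
        · exact hxb h.symm
        · exact hpxb h.symm
        · exact hpbx h
        · exact hpxpb h.symm
      · exact hne rfl
      · rcases Sym2.mem_iff.mp hw1 with rfl | rfl
        · exact hne2 (matching_eq hM.1 hm2 he hw2 (Sym2.mem_iff.mpr (Or.inr rfl)))
        · exact hpbu _ hm2 hw2
      · rcases Sym2.mem_iff.mp hw2 with rfl | rfl
        · exact hne1 (matching_eq hM.1 hm1 he hw1 (Sym2.mem_iff.mpr (Or.inl rfl)))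
        · exact hpxu _ hm1 hw1
      · rcases Sym2.mem_iff.mp hw2 with rfl | rfl
        · exact hne1 (matching_eq hM.1 hm1 he hw1 (Sym2.mem_iff.mpr (Or.inr rfl)))
        · exact hpbu _ hm1 hw1
      · exact hM.1.2 f1 hm1 f2 hm2 hne w ⟨hw1, hw2⟩
    intro f1 h1 f2 h2 hne w hw
    exact key f1 h1 f2 h2 hne w hw.1 hw.2
  have hmatch : IsMatching T M2 := by
    refine ⟨?_, hshare⟩
    intro f hf
    rcases hmem f hf with rfl | rfl | ⟨hm, _⟩
    · exact T.mem_edgeSet.mpr hpx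
    · exact T.mem_edgeSet.mpr hpb
    · exact hM.1.1 hm
  have hcard : M2.card = M.card + 1 := by
    rw [hM2, Finset.card_insert_of_notMem hx1, Finset.card_insert_of_notMem hb1,
      hM0, Finset.card_erase_of_mem he]
    have : 1 ≤ M.card := Finset.card_pos.mpr ⟨_, he⟩
    omega
  have := hM.2 M2 hmatch
  omega

lemma nonpendant_matched (hT : InClassT T) {M : Finset (Sym2 V)} (hM : IsMaxMatching T M)
    {x : V} (hx : T.degree x ≠ 1) : ∃ e ∈ M, x ∈ e := by
  by_contra hun
  push_neg at hun
  obtain ⟨u, hu, hu1⟩ := hT.2.2 x hx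
  have huu : ∀ f ∈ M, u ∉ f := by
    intro f hf hpf
    have := pendant_edge hM.1 hu1 hu.symm hf hpf
    subst this
    exact hun _ hf (by simp)
  have hnotmem : s(x, u) ∉ M := fun h => hun _ h (by simp)
  have hmatch : IsMatching T (insert s(x, u) M) := by
    constructor
    · intro f hf
      rcases Finset.mem_insert.mp hf with rfl | h
      · exact T.mem_edgeSet.mpr hu
      · exact hM.1.1 h
    · intro f1 h1 f2 h2 hne w hw
      rcases Finset.mem_insert.mp h1 with rfl | h1' <;>
        rcases Finset.mem_insert.mp h2 with rfl | h2'
      · exact hne rfl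
      · rcases Sym2.mem_iff.mp hw.1 with rfl | rfl
        · exact hun _ h2' hw.2
        · exact huu _ h2' hw.2
      · rcases Sym2.mem_iff.mp hw.2 with rfl | rfl
        · exact hun _ h1' hw.1
        · exact huu _ h1' hw.1
      · exact hM.1.2 f1 h1' f2 h2' hne w hw
  have := hM.2 _ hmatch
  rw [Finset.card_insert_of_notMem hnotmem] at this
  omega

/-- for each pendant neighbour there is a max matching using that edge -/
lemma exists_max_matching_with (hT : InClassT T) {x u : V} (hx : T.degree x ≠ 1)
    (hu : T.Adj x u) (hu1 : T.degree u = 1) :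
    ∃ M, IsMaxMatching T M ∧ s(x, u) ∈ M := by
  obtain ⟨M, hM⟩ := exists_max_matching (T := T)
  by_cases hin : s(x, u) ∈ M
  · exact ⟨M, hM, hin⟩
  have huu : ∀ f ∈ M, u ∉ f := by
    intro f hf hpf
    have := pendant_edge hM.1 hu1 hu.symm hf hpf
    subst this
    exact hin (by rwa [Sym2.eq_swap] at hf)
  obtain ⟨e, he, hxe⟩ := nonpendant_matched hT hM hx
  have hnotmem : s(x, u) ∉ M.erase e := fun h => hin (Finset.mem_of_mem_erase h)
  set M2 := insert s(x, u) (M.erase e) with hM2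
  have hmatch : IsMatching T M2 := by
    constructor
    · intro f hf
      rcases Finset.mem_insert.mp hf with rfl | h
      · exact T.mem_edgeSet.mpr hu
      · exact hM.1.1 (Finset.mem_of_mem_erase h)
    · intro f1 h1 f2 h2 hne w hw
      rcases Finset.mem_insert.mp h1 with rfl | h1' <;>
        rcases Finset.mem_insert.mp h2 with rfl | h2'
      · exact hne rfl
      · rcases Sym2.mem_iff.mp hw.1 with rfl | rfl
        · exact Finset.ne_of_mem_erase h2'
            (matching_eq hM.1 (Finset.mem_of_mem_erase h2') he hw.2 hxe)
        · exact huu _ (Finset.mem_of_mem_erase h2') hw.2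
      · rcases Sym2.mem_iff.mp hw.2 with rfl | rfl
        · exact Finset.ne_of_mem_erase h1'
            (matching_eq hM.1 (Finset.mem_of_mem_erase h1') he hw.1 hxe)
        · exact huu _ (Finset.mem_of_mem_erase h1') hw.1
      · exact hM.1.2 f1 (Finset.mem_of_mem_erase h1') f2 (Finset.mem_of_mem_erase h2')
          hne w hw
  have hcard : M2.card = M.card := by
    rw [hM2, Finset.card_insert_of_notMem hnotmem, Finset.card_erase_of_mem he]
    have : 1 ≤ M.card := Finset.card_pos.mpr ⟨_, he⟩
    omega
  exact ⟨M2, ⟨hmatch, fun N hN => hcard ▸ hM.2 N hN⟩, Finset.mem_insert_self _ _⟩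

/-- main structural lemma: an alternating path from a non-pendant vertex is a single
matching edge to a pendant neighbour -/
lemma key (hT : InClassT T) {M : Finset (Sym2 V)} (hM : IsMaxMatching T M)
    {v u : V} (hv : T.degree v ≠ 1) (p : T.Walk v u) (hp : p.IsPath)
    (halt : IsAltEdgeList (↑M) p.edges) : T.Adj v u ∧ T.degree u = 1 := by
  cases p with
  | nil => exact absurd halt (by simp [Walk.edges_nil, IsAltEdgeList])
  | cons h q =>
    rename_i w
    rw [Walk.edges_cons] at halt
    have hin : s(v, w) ∈ M := alt_head halt
    have hw1 : T.degree w = 1 := (edge_pendant hT hM hin hv).2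
    cases q with
    | nil => exact ⟨h, hw1⟩
    | cons h2 q2 =>
      rename_i x
      have hx : x = v := (pendant_unique hw1 h2 h.symm)
      subst hx
      exfalso
      have hnd := hp.support_nodup
      rw [Walk.support_cons, Walk.support_cons, List.nodup_cons] at hnd
      exact hnd.1 (List.mem_cons_of_mem _ q2.start_mem_support)

lemma maxMatchable_iff (hT : InClassT T) {v u : V} (hv : T.degree v ≠ 1) (hne : v ≠ u) :
    (MaxMatchable T v u ∨ MaxMatchable T u v) ↔ (T.Adj v u ∧ T.degree u = 1) := by
  constructor
  · rintro (⟨p, M, hp, hM, halt⟩ | ⟨p, M, hp, hM, halt⟩)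
    · exact key hT hM hv p hp halt
    · refine key hT hM hv p.reverse hp.reverse ?_
      rw [Walk.edges_reverse]
      exact alt_reverse _ halt
  · rintro ⟨hadj, hdeg⟩
    obtain ⟨M, hM, hin⟩ := exists_max_matching_with hT hv hadj hdeg
    refine Or.inl ⟨Walk.cons hadj Walk.nil, M, ?_, hM, ?_⟩
    · rw [Walk.isPath_def, Walk.support_cons, Walk.support_nil]
      simp [hne]
    · rw [Walk.edges_cons, Walk.edges_nil]
      show s(v, u) ∈ (↑M : Set (Sym2 V))
      exact hin

end AuxClassT

/-- In the group inverse graph of a tree of class 𝕋, the degree of a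
non-pendant vertex v equals the number of pendant vertices adjacent to v in T. -/
theorem classT_group_inverse_degree {V : Type*} [Fintype V] [DecidableEq V]
    (T : SimpleGraph V) [DecidableRel T.Adj] (hT : InClassT T)
    (v : V) (hv : T.degree v ≠ 1) :
    ((SimpleGraph.fromRel (MaxMatchable T)).neighborSet v).ncard =
      pendantNbrs T v := by
  have hset : (SimpleGraph.fromRel (MaxMatchable T)).neighborSet v =
      ↑((T.neighborFinset v).filter fun u => T.degree u = 1) := by
    ext u
    simp only [mem_neighborSet, fromRel_adj, Finset.coe_filter, Set.mem_setOf_eq,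
      mem_neighborFinset]
    constructor
    · rintro ⟨hne, h⟩
      exact (AuxClassT.maxMatchable_iff hT hv hne).mp h
    · rintro ⟨hadj, hdeg⟩
      exact ⟨hadj.ne, (AuxClassT.maxMatchable_iff hT hv hadj.ne).mpr ⟨hadj, hdeg⟩⟩
  rw [hset, Set.ncard_coe_finset]
  rfl
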